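/- Let π(z) = (1−z)(1−λ)g(λ(1−z)) / (g(λ(1−z)) − z) be the Pollaczek–Khinchin generating function of an M/G/1 queue with arrival rate λ ∈ (0,1) and service-time Laplace transform g with g(0)=1, g'(0)=−1. Then π(0) + π'(0) = (1−λ)/g(λ), i.e., the probability that the queue length is at most one equals (1−λ)/g(λ). -/

import Mathlib

/-- Pollaczek–Khinchin: with π(z) = (1−z)(1−λ)g(λ(1−z))/(g(λ(1−z)) − z), g(0)=1,
g'(0) = −1, one has π(0) + π'(0) = (1−λ)/g(λ). -/
theorem stmt16 (g : ℝ → ℝ) (lam : ℝ) (hlam : lam ∈ Set.Ioo (0:ℝ) 1)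
    (hg0 : g 0 = 1) (hg'0 : deriv g 0 = -1)
    (hgdiff : Differentiable ℝ g) (hgpos : 0 < g lam) :
    (fun z : ℝ => (1-z)*(1-lam)*g (lam*(1-z)) / (g (lam*(1-z)) - z)) 0 +
      deriv (fun z : ℝ => (1-z)*(1-lam)*g (lam*(1-z)) / (g (lam*(1-z)) - z)) 0
      = (1-lam)/g lam := by
  set c : ℝ := deriv g lam with hc
  have hinner : HasDerivAt (fun z : ℝ => lam * (1 - z)) (lam * (-1)) 0 := by
    simpa using ((hasDerivAt_id (0:ℝ)).const_sub 1).const_mul lam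
  have hgl : HasDerivAt g c lam := (hgdiff lam).hasDerivAt
  have hgl0 : HasDerivAt g c (lam * (1 - 0)) := by simpa using hgl
  have hgc : HasDerivAt (fun z : ℝ => g (lam * (1 - z))) (c * (lam * (-1))) 0 :=
    hgl0.comp 0 hinner
  have hN : HasDerivAt (fun z : ℝ => (1-z)*(1-lam)*g (lam*(1-z)))
      ((-1 * (1 - lam)) * g (lam * (1 - 0)) + (1 - 0)*(1-lam) * (c * (lam * (-1)))) 0 := by
    have h1 : HasDerivAt (fun z : ℝ => (1-z)*(1-lam)) (-1 * (1 - lam)) 0 := by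
      simpa using ((hasDerivAt_id (0:ℝ)).const_sub 1).mul_const (1 - lam)
    simpa using h1.fun_mul hgc
  have hD : HasDerivAt (fun z : ℝ => g (lam*(1-z)) - z) (c * (lam * (-1)) - 1) 0 :=
    hgc.sub (hasDerivAt_id 0)
  have hD0 : g (lam * (1 - (0:ℝ))) - 0 ≠ 0 := by
    simpa using hgpos.ne'
  have hdiv := (hN.fun_div hD hD0).deriv
  have hgl0' : g (lam * (1 - (0:ℝ))) = g lam := by norm_num
  rw [hdiv]
  simp only [hgl0']
  have hg : g lam ≠ 0 := hgpos.ne'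
  field_simp
  ring
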